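/- Shortest-path characterization of the Split Algorithm: build a weighted digraph G on vertices {0, 1, ..., n+1} where for each pair i < k the arc (i, k) has weight w(i,k) = min( sum_{ℓ=i}^{k-1} t_R(v_ℓ, v_{ℓ+1}), min_{i < j < k} t(o_{i,j,k}) ) (where the inner min is taken over drone nodes j, and is omitted when k = i+1 gives only the truck option for j nonexistent). Then the weight of a shortest path from 0 to n+1 in G equals the minimum cost over all solutions of the h-FSTSP that respect h and use at most one drone delivery per operation. -/

import Mathlib

open Finset NNReal

/-- Cost of the truck path of operation `o_{i,j,k}`: follow the sequence from `v i`
to `v k`, skipping `v j`. -/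
noncomputable def truckCost (tR : ℕ → ℕ → ℝ≥0) (v : ℕ → ℕ) (i j k : ℕ) : ℝ≥0 :=
  (∑ ℓ ∈ Finset.Ico i (j - 1), tR (v ℓ) (v (ℓ + 1))) + tR (v (j - 1)) (v (j + 1)) +
    ∑ ℓ ∈ Finset.Ico (j + 1) k, tR (v ℓ) (v (ℓ + 1))

/-- Cost of the drone path of operation `o_{i,j,k}`. -/
noncomputable def droneCost (tD : ℕ → ℕ → ℝ≥0) (v : ℕ → ℕ) (i j k : ℕ) : ℝ≥0 :=
  tD (v i) (v j) + tD (v j) (v k)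

/-- Cost of operation `o_{i,j,k}`. -/
noncomputable def opCost (tR tD : ℕ → ℕ → ℝ≥0) (v : ℕ → ℕ) (i j k : ℕ) : ℝ≥0 :=
  max (truckCost tR v i j k) (droneCost tD v i j k)

/-- Cost of a drone-free truck path from `v a` to `v b` following the sequence. -/
noncomputable def freeCost (tR : ℕ → ℕ → ℝ≥0) (v : ℕ → ℕ) (a b : ℕ) : ℝ≥0 :=
  ∑ ℓ ∈ Finset.Ico a b, tR (v ℓ) (v (ℓ + 1))

/-- An operation over an interval `[a, b]` of indices of the cycle, with an optional
drone node index `j` (with `a < j < b`). -/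
abbrev Operation := ℕ × ℕ × Option ℕ

/-- Cost of an operation: truck-only cost if no drone node, else `t(o_{a,j,b})`. -/
noncomputable def operationCost (tR tD : ℕ → ℕ → ℝ≥0) (v : ℕ → ℕ) : Operation → ℝ≥0
  | (a, b, none) => freeCost tR v a b
  | (a, b, some j) => opCost tR tD v a j b

/-- Total cost of a solution (a list of operations). -/
noncomputable def solCost (tR tD : ℕ → ℕ → ℝ≥0) (v : ℕ → ℕ) (sol : List Operation) : ℝ≥0 :=
  (sol.map (operationCost tR tD v)).sum

/-- A feasible solution respecting the cycle `(v 0, …, v (n+1))`: a nonempty chain of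
operations over consecutive intervals partitioning `[0, n+1]`, each drone node lying
strictly inside its interval. -/
def Feasible (n : ℕ) (sol : List Operation) : Prop :=
  sol ≠ [] ∧
  (sol.head?.map Prod.fst) = some 0 ∧
  (sol.getLast?.map (fun o => o.2.1)) = some (n + 1) ∧
  List.Chain' (fun o o' => o.2.1 = o'.1) sol ∧
  ∀ o ∈ sol, o.1 < o.2.1 ∧ ∀ j, o.2.2 = some j → o.1 < j ∧ j < o.2.1

/-- Arc weight of the Split Algorithm digraph for arc `(i, k)`: the minimum of the
truck-only cost and the best operation cost over drone nodes `j` with `i < j < k`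
(omitted when no such `j` exists). -/
noncomputable def arcWeight (tR tD : ℕ → ℕ → ℝ≥0) (v : ℕ → ℕ) (i k : ℕ) : ℝ≥0 :=
  if h : (Finset.Ioo i k).Nonempty then
    min (freeCost tR v i k) ((Finset.Ioo i k).inf' h fun j => opCost tR tD v i j k)
  else freeCost tR v i k

/-- A path from `0` to `n+1` in the digraph on `{0, …, n+1}` using arcs `(i, k)` with
`i < k`, given by its (strictly increasing) list of vertices. -/
def PathOK (n : ℕ) (c : List ℕ) : Prop :=
  c.head? = some 0 ∧ c.getLast? = some (n + 1) ∧ List.Chain' (· < ·) c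

/-- The weight of a path: the sum of the weights of its arcs. -/
noncomputable def pathWeight (w : ℕ → ℕ → ℝ≥0) (c : List ℕ) : ℝ≥0 :=
  ((c.zip c.tail).map fun p => w p.1 p.2).sum


noncomputable def bestOp (tR tD : ℕ → ℕ → ℝ≥0) (v : ℕ → ℕ) (a b : ℕ) : Operation :=
  if h : (Finset.Ioo a b).Nonempty then
    if freeCost tR v a b ≤ (Finset.Ioo a b).inf' h (fun j => opCost tR tD v a j b) then
      (a, b, none)
    else
      (a, b, some ((Finset.exists_mem_eq_inf' h (fun j => opCost tR tD v a j b)).choose))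
  else (a, b, none)

lemma bestOp_fst (tR tD : ℕ → ℕ → ℝ≥0) (v : ℕ → ℕ) (a b : ℕ) :
    (bestOp tR tD v a b).1 = a := by
  unfold bestOp; split <;> [skip; rfl]; split <;> rfl

lemma bestOp_snd (tR tD : ℕ → ℕ → ℝ≥0) (v : ℕ → ℕ) (a b : ℕ) :
    (bestOp tR tD v a b).2.1 = b := by
  unfold bestOp; split <;> [skip; rfl]; split <;> rfl

lemma bestOp_drone (tR tD : ℕ → ℕ → ℝ≥0) (v : ℕ → ℕ) (a b : ℕ) :
    ∀ j, (bestOp tR tD v a b).2.2 = some j → a < j ∧ j < b := by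
  intro j hj
  unfold bestOp at hj
  split at hj
  · rename_i h
    split at hj
    · simp at hj
    · simp only [Option.some.injEq] at hj
      have := (Finset.exists_mem_eq_inf' h (fun j => opCost tR tD v a j b)).choose_spec.1
      rw [hj] at this
      exact Finset.mem_Ioo.mp this
  · simp at hj

lemma bestOp_cost (tR tD : ℕ → ℕ → ℝ≥0) (v : ℕ → ℕ) (a b : ℕ) :
    operationCost tR tD v (bestOp tR tD v a b) = arcWeight tR tD v a b := by
  unfold bestOp arcWeight
  split
  · rename_i h
    split
    · rename_i hle
      simp [operationCost, min_eq_left hle]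
    · rename_i hle
      have hspec := (Finset.exists_mem_eq_inf' h (fun j => opCost tR tD v a j b)).choose_spec
      simp only [operationCost]
      rw [← hspec.2, min_eq_right (le_of_not_ge hle)]
  · simp [operationCost]

lemma arcWeight_le (tR tD : ℕ → ℕ → ℝ≥0) (v : ℕ → ℕ) (a b : ℕ) (oj : Option ℕ)
    (hoj : ∀ j, oj = some j → a < j ∧ j < b) :
    arcWeight tR tD v a b ≤ operationCost tR tD v (a, b, oj) := by
  cases oj with
  | none =>
    simp only [operationCost]
    unfold arcWeight
    split
    · exact min_le_left _ _
    · exact le_rfl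
  | some j =>
    obtain ⟨h1, h2⟩ := hoj j rfl
    have hne : (Finset.Ioo a b).Nonempty := ⟨j, Finset.mem_Ioo.mpr ⟨h1, h2⟩⟩
    simp only [operationCost]
    unfold arcWeight
    rw [dif_pos hne]
    exact le_trans (min_le_right _ _)
      (Finset.inf'_le _ (Finset.mem_Ioo.mpr ⟨h1, h2⟩))

lemma pathWeight_cons_cons (w : ℕ → ℕ → ℝ≥0) (x y : ℕ) (t : List ℕ) :
    pathWeight w (x :: y :: t) = w x y + pathWeight w (y :: t) := by
  simp [pathWeight]

lemma solCost_cons (tR tD : ℕ → ℕ → ℝ≥0) (v : ℕ → ℕ) (o : Operation) (s : List Operation) :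
    solCost tR tD v (o :: s) = operationCost tR tD v o + solCost tR tD v s := by
  simp [solCost]

lemma aux_path_of_sol (tR tD : ℕ → ℕ → ℝ≥0) (v : ℕ → ℕ) :
    ∀ (sol : List Operation) (a b : ℕ),
      sol.head?.map Prod.fst = some a →
      (sol.getLast?.map (fun o => o.2.1)) = some b →
      List.Chain' (fun o o' => o.2.1 = o'.1) sol →
      (∀ o ∈ sol, o.1 < o.2.1 ∧ ∀ j, o.2.2 = some j → o.1 < j ∧ j < o.2.1) →
      ∃ c : List ℕ, c.head? = some a ∧ c.getLast? = some b ∧ List.Chain' (· < ·) c ∧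
        pathWeight (arcWeight tR tD v) c ≤ solCost tR tD v sol
  | [], a, b => by simp
  | [o], a, b => by
    intro h1 h2 h3 h4
    simp only [List.head?_cons, Option.map_some, Option.some.injEq] at h1
    simp only [List.getLast?_singleton, Option.map_some, Option.some.injEq] at h2
    obtain ⟨hab, hdj⟩ := h4 o (by simp)
    refine ⟨[a, b], rfl, rfl, ?_, ?_⟩
    · exact List.isChain_pair.mpr (h1 ▸ h2 ▸ hab)
    · have h : arcWeight tR tD v o.1 o.2.1 ≤ operationCost tR tD v o :=
        arcWeight_le tR tD v o.1 o.2.1 o.2.2 hdj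
      simpa [pathWeight, solCost, h1, h2] using h
  | o :: o' :: rest, a, b => by
    intro h1 h2 h3 h4
    simp only [List.head?_cons, Option.map_some, Option.some.injEq] at h1
    rw [List.getLast?_cons_cons] at h2
    replace h3 := List.isChain_cons_cons.mp h3
    obtain ⟨hrel, h3'⟩ := h3
    obtain ⟨c, hc1, hc2, hc3, hcw⟩ := aux_path_of_sol tR tD v (o' :: rest) o'.1 b
      (by simp) h2 h3' (fun x hx => h4 x (List.mem_cons_of_mem _ hx))
    obtain ⟨d, t, rfl⟩ : ∃ d t, c = d :: t := by
      cases c with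
      | nil => simp at hc1
      | cons d t => exact ⟨d, t, rfl⟩
    simp only [List.head?_cons, Option.some.injEq] at hc1
    obtain ⟨hab, hdj⟩ := h4 o (by simp)
    refine ⟨a :: d :: t, rfl, by simpa using hc2, ?_, ?_⟩
    · exact List.isChain_cons_cons.mpr ⟨by rw [hc1, ← hrel, ← h1]; exact hab, hc3⟩
    · rw [pathWeight_cons_cons, solCost_cons]
      have harc : arcWeight tR tD v a d ≤ operationCost tR tD v o := by
        have h : arcWeight tR tD v o.1 o.2.1 ≤ operationCost tR tD v o :=
          arcWeight_le tR tD v o.1 o.2.1 o.2.2 hdj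
        rwa [h1, hrel, ← hc1] at h
      exact add_le_add harc hcw

lemma aux_sol_of_path (tR tD : ℕ → ℕ → ℝ≥0) (v : ℕ → ℕ) :
    ∀ (t : List ℕ) (x y : ℕ), List.Chain' (· < ·) (x :: y :: t) →
      ∃ sol : List Operation, sol ≠ [] ∧
        sol.head?.map Prod.fst = some x ∧
        sol.getLast?.map (fun o => o.2.1) = (y :: t).getLast? ∧
        List.Chain' (fun o o' => o.2.1 = o'.1) sol ∧
        (∀ o ∈ sol, o.1 < o.2.1 ∧ ∀ j, o.2.2 = some j → o.1 < j ∧ j < o.2.1) ∧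
        solCost tR tD v sol = pathWeight (arcWeight tR tD v) (x :: y :: t)
  | [], x, y => by
    intro hch
    have hxy : x < y := (List.isChain_pair.mp hch)
    refine ⟨[bestOp tR tD v x y], by simp, by simp [bestOp_fst], by simp [bestOp_snd],
      List.isChain_singleton _, ?_, ?_⟩
    · intro o ho
      simp only [List.mem_singleton] at ho
      subst ho
      exact ⟨by rw [bestOp_fst, bestOp_snd]; exact hxy, by
        intro j hj
        rw [bestOp_fst, bestOp_snd]
        exact bestOp_drone tR tD v x y j hj⟩
    · simp [solCost, pathWeight, bestOp_cost]
  | z :: t, x, y => by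
    intro hch
    have hxy : x < y := by
      exact (List.isChain_cons_cons.mp hch).1
    obtain ⟨sol, hne, hh, hl, hc, hm, hw⟩ :=
      aux_sol_of_path tR tD v t y z (List.isChain_cons_cons.mp hch).2
    obtain ⟨s, ss, rfl⟩ : ∃ s ss, sol = s :: ss := by
      cases sol with
      | nil => simp at hne
      | cons s ss => exact ⟨s, ss, rfl⟩
    simp only [List.head?_cons, Option.map_some, Option.some.injEq] at hh
    refine ⟨bestOp tR tD v x y :: s :: ss, by simp, by simp [bestOp_fst], ?_, ?_, ?_, ?_⟩
    · rw [List.getLast?_cons_cons]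
      simpa using hl
    · exact List.isChain_cons_cons.mpr ⟨by rw [bestOp_snd, hh], hc⟩
    · intro o ho
      rcases List.mem_cons.mp ho with h | h
      · subst h
        refine ⟨by rw [bestOp_fst, bestOp_snd]; exact hxy, ?_⟩
        intro j hj
        rw [bestOp_fst, bestOp_snd]
        exact bestOp_drone tR tD v x y j hj
      · exact hm o h
    · rw [solCost_cons, bestOp_cost, hw]
      exact (pathWeight_cons_cons _ x y (z :: t)).symm

/-- Shortest-path characterization of the Split Algorithm: the shortest 0-to-(n+1)
path weight in the Split digraph equals the minimum cost of a solution of the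
h-FSTSP respecting `h` with at most one drone delivery per operation. -/
theorem split_shortest_path_eq_min_solution (n : ℕ) (v : ℕ → ℕ) (tR tD : ℕ → ℕ → ℝ≥0) :
    sInf {x : ℝ≥0 | ∃ c, PathOK n c ∧ pathWeight (arcWeight tR tD v) c = x}
      = sInf {x : ℝ≥0 | ∃ sol, Feasible n sol ∧ solCost tR tD v sol = x} := by
  apply le_antisymm
  · apply le_csInf
    · refine ⟨solCost tR tD v [(0, n + 1, none)], [(0, n + 1, none)],
        ⟨by simp, by simp, by simp, List.isChain_singleton _, ?_⟩, rfl⟩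
      intro o ho
      simp only [List.mem_singleton] at ho
      subst ho
      exact ⟨by simp, by simp⟩
    · rintro x ⟨sol, ⟨hne, hh, hl, hc, hm⟩, rfl⟩
      obtain ⟨c, hc1, hc2, hc3, hcw⟩ := aux_path_of_sol tR tD v sol 0 (n + 1) hh hl hc hm
      exact le_trans (csInf_le (OrderBot.bddBelow _) ⟨c, ⟨hc1, hc2, hc3⟩, rfl⟩) hcw
  · apply le_csInf
    · refine ⟨pathWeight (arcWeight tR tD v) [0, n + 1], [0, n + 1],
        ⟨rfl, rfl, List.isChain_pair.mpr (by omega)⟩, rfl⟩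
    · rintro x ⟨c, ⟨hh, hl, hch⟩, rfl⟩
      obtain ⟨y, t, rfl⟩ : ∃ y t, c = 0 :: y :: t := by
        cases c with
        | nil => simp at hh
        | cons d rest =>
          simp only [List.head?_cons, Option.some.injEq] at hh
          subst hh
          cases rest with
          | nil => simp at hl
          | cons y t => exact ⟨y, t, rfl⟩
      obtain ⟨sol, hne, hsh, hsl, hsc, hsm, hsw⟩ := aux_sol_of_path tR tD v t 0 y hch
      refine le_trans (csInf_le (OrderBot.bddBelow _)
        ⟨sol, ⟨hne, hsh, ?_, hsc, hsm⟩, rfl⟩) (le_of_eq hsw)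
      rw [hsl]
      rw [List.getLast?_cons_cons] at hl
      exact hl
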